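/- Let g, h : ℝⁿ → ℝ be strongly convex with modulus σ > 0 and assume φ := g − h is bounded below. Let ρ > 0 and let sequences (x^k), (y^k), (w^k) in ℝⁿ, stepsizes t_k > 0 and parameters ν_k ≥ 0 satisfy, for every k: w^k ∈ ∂h(x^k), w^k ∈ ∂g(y^k), d^k := y^k − x^k, x^{k+1} = y^k + t_k d^k, and φ(x^{k+1}) ≤ φ(y^k) − ρ t_k² ‖d^k‖² + ν_k. If for every δ > 0 there exists k₀ ∈ ℕ such that ν_k ≤ δ ‖d^k‖² for all k ≥ k₀, then ‖d^k‖ → 0 and every cluster point of (x^k) is a critical point of φ, i.e. for every cluster point x̄ there exists w̄ ∈ ∂g(x̄) ∩ ∂h(x̄). -/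

import Mathlib

open Set Filter Topology

noncomputable section

/-- The (convex-analysis) subdifferential of `f` at `x`:
the set of `w` with `f z ≥ f x + ⟨w, z - x⟩` for all `z`. -/
def subdiff {n : ℕ} (f : EuclideanSpace ℝ (Fin n) → ℝ) (x : EuclideanSpace ℝ (Fin n)) :
    Set (EuclideanSpace ℝ (Fin n)) :=
  {w | ∀ z, f x + (inner ℝ w (z - x) : ℝ) ≤ f z}

/-- `f` is strongly convex with modulus `σ`. -/
def StrongConvexWith {n : ℕ} (σ : ℝ) (f : EuclideanSpace ℝ (Fin n) → ℝ) : Prop :=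
  ∀ x y : EuclideanSpace ℝ (Fin n), ∀ t : ℝ, 0 < t → t < 1 →
    f (t • x + (1 - t) • y) ≤ t * f x + (1 - t) * f y - σ / 2 * (t * (1 - t) * ‖x - y‖ ^ 2)

/-- Strengthened subgradient inequality for strongly convex functions (with constant σ/4). -/
lemma strong_subgrad {n : ℕ} {f : EuclideanSpace ℝ (Fin n) → ℝ} {σ : ℝ}
    (hf : StrongConvexWith σ f) {y w : EuclideanSpace ℝ (Fin n)} (hw : w ∈ subdiff f y)
    (z : EuclideanSpace ℝ (Fin n)) :
    f y + (inner ℝ w (z - y) : ℝ) + σ / 4 * ‖z - y‖ ^ 2 ≤ f z := by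
  have h1 := hf z y (1/2) (by norm_num) (by norm_num)
  have h2 := hw ((1/2 : ℝ) • z + (1/2 : ℝ) • y)
  have e : ((1/2 : ℝ) • z + (1/2 : ℝ) • y) - y = (1/2 : ℝ) • (z - y) := by
    module
  rw [e, real_inner_smul_right] at h2
  linarith

/-- A strongly convex function (with σ > 0) is convex, hence continuous. -/
lemma strong_continuous {n : ℕ} {f : EuclideanSpace ℝ (Fin n) → ℝ} {σ : ℝ} (hσ : 0 < σ)
    (hf : StrongConvexWith σ f) : Continuous f := by
  have hconv : ConvexOn ℝ (Set.univ) f := by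
    refine ⟨convex_univ, fun x _ y _ a b ha hb hab => ?_⟩
    rcases eq_or_lt_of_le ha with rfl | ha'
    · have hb1 : b = 1 := by linarith
      subst hb1; simp
    rcases eq_or_lt_of_le hb with rfl | hb'
    · have ha1 : a = 1 := by linarith
      subst ha1; simp
    have hb1 : b = 1 - a := by linarith
    subst hb1
    have := hf x y a ha' (by linarith)
    have hnn : 0 ≤ σ / 2 * (a * (1 - a) * ‖x - y‖ ^ 2) := by positivity
    simp only [smul_eq_mul]
    linarith
  have := hconv.continuousOn isOpen_univ
  exact continuousOn_univ.mp this

theorem stmt11 {n : ℕ} (g h : EuclideanSpace ℝ (Fin n) → ℝ) (σ ρ : ℝ)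
    (hσ : 0 < σ) (hρ : 0 < ρ)
    (hgs : StrongConvexWith σ g) (hhs : StrongConvexWith σ h)
    (hbd : BddBelow (Set.range fun z => g z - h z))
    (x y w : ℕ → EuclideanSpace ℝ (Fin n)) (t ν : ℕ → ℝ)
    (ht : ∀ k, 0 < t k) (hν : ∀ k, 0 ≤ ν k)
    (hwh : ∀ k, w k ∈ subdiff h (x k)) (hwg : ∀ k, w k ∈ subdiff g (y k))
    (hstep : ∀ k, x (k + 1) = y k + t k • (y k - x k))
    (hls : ∀ k, g (x (k + 1)) - h (x (k + 1)) ≤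
      (g (y k) - h (y k)) - ρ * t k ^ 2 * ‖y k - x k‖ ^ 2 + ν k)
    (hS3 : ∀ δ : ℝ, 0 < δ → ∃ k₀ : ℕ, ∀ k ≥ k₀, ν k ≤ δ * ‖y k - x k‖ ^ 2) :
    Filter.Tendsto (fun k => ‖y k - x k‖) Filter.atTop (nhds 0) ∧
      (∀ xbar : EuclideanSpace ℝ (Fin n),
        (∃ φ : ℕ → ℕ, StrictMono φ ∧
          Filter.Tendsto (fun ℓ => x (φ ℓ)) Filter.atTop (nhds xbar)) →
        ∃ wbar, wbar ∈ subdiff g xbar ∩ subdiff h xbar) := by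
  -- key decrease estimate φ(y k) ≤ φ(x k) - σ/2 ‖d k‖²
  have key : ∀ k, g (y k) - h (y k) ≤ (g (x k) - h (x k)) - σ/2 * ‖y k - x k‖ ^ 2 := by
    intro k
    have h1 := strong_subgrad hhs (hwh k) (y k)
    have h2 := strong_subgrad hgs (hwg k) (x k)
    have e1 : (inner ℝ (w k) (x k - y k) : ℝ) = - inner ℝ (w k) (y k - x k) := by
      rw [← inner_neg_right, neg_sub]
    have e2 : ‖x k - y k‖ = ‖y k - x k‖ := norm_sub_rev _ _
    rw [e1, e2] at h2
    linarith
  obtain ⟨k₀, hk₀⟩ := hS3 (σ/4) (by positivity)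
  have hdesc : ∀ k, k₀ ≤ k → g (x (k+1)) - h (x (k+1)) ≤
      (g (x k) - h (x k)) - σ/4 * ‖y k - x k‖ ^ 2 := by
    intro k hk
    have h1 := hls k
    have h2 := key k
    have h3 := hk₀ k hk
    have h4 : 0 ≤ ρ * t k ^ 2 * ‖y k - x k‖ ^ 2 := by positivity
    linarith
  obtain ⟨m, hm⟩ := hbd
  have hmle : ∀ z, m ≤ g z - h z := fun z => hm (Set.mem_range_self z)
  set a : ℕ → ℝ := fun j => σ/4 * ‖y (k₀ + j) - x (k₀ + j)‖ ^ 2 with ha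
  have hasum : ∀ N, ∑ j ∈ Finset.range N, a j ≤ (g (x k₀) - h (x k₀)) - m := by
    intro N
    have htel : ∑ j ∈ Finset.range N,
        ((g (x (k₀ + j)) - h (x (k₀ + j))) - (g (x (k₀ + j + 1)) - h (x (k₀ + j + 1))))
        = (g (x k₀) - h (x k₀)) - (g (x (k₀ + N)) - h (x (k₀ + N))) := by
      simpa [add_assoc] using Finset.sum_range_sub' (fun j => g (x (k₀ + j)) - h (x (k₀ + j))) N
    have hle : ∑ j ∈ Finset.range N, a j ≤ ∑ j ∈ Finset.range N,
        ((g (x (k₀ + j)) - h (x (k₀ + j))) - (g (x (k₀ + j + 1)) - h (x (k₀ + j + 1)))) := by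
      apply Finset.sum_le_sum
      intro j _
      have := hdesc (k₀ + j) (Nat.le_add_right _ _)
      simp only [ha]
      linarith
    have := hmle (x (k₀ + N))
    linarith [hle, htel.le, htel.ge]
  have hsummable : Summable a :=
    summable_of_sum_range_le (fun j => by positivity) hasum
  have ha0 : Tendsto a atTop (nhds 0) := hsummable.tendsto_atTop_zero
  have hsq0 : Tendsto (fun j => ‖y (k₀ + j) - x (k₀ + j)‖ ^ 2) atTop (nhds 0) := by
    have : Tendsto (fun j => (σ/4)⁻¹ * a j) atTop (nhds ((σ/4)⁻¹ * 0)) :=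
      ha0.const_mul _
    simp only [mul_zero] at this
    convert this using 2 with j
    field_simp [ha]
    ring
  have hnorm0 : Tendsto (fun j => ‖y (k₀ + j) - x (k₀ + j)‖) atTop (nhds 0) := by
    have hs : Tendsto (fun j => Real.sqrt (‖y (k₀ + j) - x (k₀ + j)‖ ^ 2)) atTop
        (nhds (Real.sqrt 0)) := (Real.continuous_sqrt.tendsto 0).comp hsq0
    simpa [Real.sqrt_sq (norm_nonneg _)] using hs
  have hdtend : Tendsto (fun k => ‖y k - x k‖) atTop (nhds 0) := by
    rw [← tendsto_add_atTop_iff_nat k₀]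
    convert hnorm0 using 2 with j
    rw [add_comm]
  refine ⟨hdtend, ?_⟩
  rintro xbar ⟨ψ, hψm, hψx⟩
  have hgc : Continuous g := strong_continuous hσ hgs
  have hhc : Continuous h := strong_continuous hσ hhs
  have hd0 : Tendsto (fun k => y k - x k) atTop (nhds 0) :=
    tendsto_zero_iff_norm_tendsto_zero.mpr hdtend
  have hdψ : Tendsto (fun ℓ => y (ψ ℓ) - x (ψ ℓ)) atTop (nhds 0) :=
    hd0.comp hψm.tendsto_atTop
  have hψy : Tendsto (fun ℓ => y (ψ ℓ)) atTop (nhds xbar) := by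
    have := hψx.add hdψ
    simpa using this
  -- bound on w along the subsequence
  obtain ⟨zmax, _, hzmax⟩ := (isCompact_closedBall xbar 2).exists_isMaxOn
    (Metric.nonempty_closedBall.mpr (by norm_num)) (hhc.continuousOn)
  have hev1 : ∀ᶠ ℓ in atTop, x (ψ ℓ) ∈ Metric.closedBall xbar 1 :=
    hψx.eventually_mem (Metric.closedBall_mem_nhds xbar one_pos)
  have hev2 : ∀ᶠ ℓ in atTop, h xbar - 1 ≤ h (x (ψ ℓ)) :=
    (hhc.continuousAt.tendsto.comp hψx).eventually (eventually_ge_nhds (by linarith))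
  obtain ⟨L, hL⟩ := eventually_atTop.mp (hev1.and hev2)
  set C : ℝ := max 0 (h zmax - h xbar + 1) with hC
  have hWball : ∀ j, w (ψ (L + j)) ∈ Metric.closedBall (0 : EuclideanSpace ℝ (Fin n)) C := by
    intro j
    obtain ⟨hball, hlb⟩ := hL (L + j) (Nat.le_add_right _ _)
    rw [Metric.mem_closedBall, dist_zero_right]
    set k := ψ (L + j)
    by_cases hw0 : w k = 0
    · simp [hw0, hC, le_max_left]
    · have hwn : (0:ℝ) < ‖w k‖ := norm_pos_iff.mpr hw0
      set z := x k + (‖w k‖⁻¹ : ℝ) • w k with hz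
      have hinner : (inner ℝ (w k) (z - x k) : ℝ) = ‖w k‖ := by
        rw [hz]
        simp only [add_sub_cancel_left, real_inner_smul_right, real_inner_self_eq_norm_sq]
        field_simp
      have hsub := hwh k z
      rw [hinner] at hsub
      have hzball : z ∈ Metric.closedBall xbar 2 := by
        rw [Metric.mem_closedBall, dist_eq_norm]
        have : z - xbar = (x k - xbar) + (‖w k‖⁻¹ : ℝ) • w k := by rw [hz]; abel
        rw [this]
        have h1 : ‖(x k) - xbar‖ ≤ 1 := by
          rw [Metric.mem_closedBall, dist_eq_norm] at hball; exact hball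
        have h2 : ‖(‖w k‖⁻¹ : ℝ) • w k‖ = 1 := by
          rw [norm_smul, norm_inv, norm_norm, inv_mul_cancel₀ (ne_of_gt hwn)]
        calc ‖(x k - xbar) + (‖w k‖⁻¹ : ℝ) • w k‖ ≤ ‖x k - xbar‖ + ‖(‖w k‖⁻¹ : ℝ) • w k‖ :=
              norm_add_le _ _
          _ ≤ 2 := by rw [h2]; linarith
      have hmax := hzmax hzball
      have hmax' : h z ≤ h zmax := hmax
      have : ‖w k‖ ≤ h zmax - h xbar + 1 := by linarith
      exact this.trans (le_max_right _ _)
  obtain ⟨wbar, _, χ, hχm, hχt⟩ := (isCompact_closedBall (0 : EuclideanSpace ℝ (Fin n)) C)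
    |>.tendsto_subseq hWball
  -- the final index sequence
  set idx : ℕ → ℕ := fun j => ψ (L + χ j) with hidx
  have hmono : StrictMono (fun j => L + χ j) := fun a b hab =>
    Nat.add_lt_add_left (hχm hab) L
  have hxtend : Tendsto (fun j => x (idx j)) atTop (nhds xbar) :=
    hψx.comp hmono.tendsto_atTop
  have hytend : Tendsto (fun j => y (idx j)) atTop (nhds xbar) :=
    hψy.comp hmono.tendsto_atTop
  have hwtend : Tendsto (fun j => w (idx j)) atTop (nhds wbar) := hχt
  refine ⟨wbar, ?_, ?_⟩
  · intro z
    have hle : ∀ j, g (y (idx j)) + (inner ℝ (w (idx j)) (z - y (idx j)) : ℝ) ≤ g z :=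
      fun j => hwg (idx j) z
    have htend : Tendsto (fun j => g (y (idx j)) + (inner ℝ (w (idx j)) (z - y (idx j)) : ℝ))
        atTop (nhds (g xbar + (inner ℝ wbar (z - xbar) : ℝ))) :=
      ((hgc.continuousAt.tendsto).comp hytend).add
        (hwtend.inner (tendsto_const_nhds.sub hytend))
    exact le_of_tendsto htend (Eventually.of_forall hle)
  · intro z
    have hle : ∀ j, h (x (idx j)) + (inner ℝ (w (idx j)) (z - x (idx j)) : ℝ) ≤ h z :=
      fun j => hwh (idx j) z
    have htend : Tendsto (fun j => h (x (idx j)) + (inner ℝ (w (idx j)) (z - x (idx j)) : ℝ))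
        atTop (nhds (h xbar + (inner ℝ wbar (z - xbar) : ℝ))) :=
      ((hhc.continuousAt.tendsto).comp hxtend).add
        (hwtend.inner (tendsto_const_nhds.sub hxtend))
    exact le_of_tendsto htend (Eventually.of_forall hle)
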